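/- For an uncountable set Λ, the space σ_{n+1}(Λ) does not embed topologically into σ_n(Γ)^ω for any set Γ. -/
import Mathlib

def sigmaSet (Γ : Type*) (n : ℕ) : Set (Γ → Bool) :=
  {x | {γ | x γ = true}.Finite ∧ {γ | x γ = true}.ncard ≤ n}

open Set


lemma nbhd_dep {Λ : Type*} {s : Set (Λ → Bool)} (g : s → Bool) (hg : Continuous g)
    (x₀ : s) : ∃ F : Finset Λ, ∀ y : s, (∀ μ ∈ F, y.val μ = x₀.val μ) → g y = g x₀ := by
  have hU : IsOpen (g ⁻¹' {g x₀}) := (isOpen_discrete _).preimage hg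
  rw [isOpen_induced_iff] at hU
  obtain ⟨V, hV, hVU⟩ := hU
  have hx₀V : x₀.val ∈ V := by
    have : x₀ ∈ g ⁻¹' {g x₀} := rfl
    rw [← hVU] at this; exact this
  obtain ⟨I, u, hu, hsub⟩ := isOpen_pi_iff.mp hV x₀.val hx₀V
  refine ⟨I, fun y hy => ?_⟩
  have hyV : y.val ∈ V := by
    apply hsub
    intro i hi
    have := (hu i hi).2
    rw [← hy i hi] at this
    exact this
  have : y ∈ g ⁻¹' {g x₀} := by rw [← hVU]; exact hyV
  exact this

lemma build_free {Λ : Type*} (F : Λ → Finset Λ) (S : Set Λ) (hS : ¬ S.Countable)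
    (hfib : ∀ x, {a | a ∈ S ∧ x ∈ F a}.Countable) (m : ℕ) :
    ∃ T : Finset Λ, ↑T ⊆ S ∧ T.card = m ∧ ∀ a ∈ T, ∀ b ∈ T, a ≠ b → a ∉ F b := by
  classical
  induction m with
  | zero => exact ⟨∅, by simp⟩
  | succ m ih =>
    obtain ⟨T, hTS, hTc, hTfree⟩ := ih
    set Bad : Set Λ := (↑(T ∪ T.biUnion F) : Set Λ) ∪ ⋃ a ∈ T, {μ | μ ∈ S ∧ a ∈ F μ}
      with hBadDef
    have hBad : Bad.Countable := by
      apply Countable.union (Finset.countable_toSet _)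
      exact Countable.biUnion (Finset.countable_toSet T) fun a _ => hfib a
    have hne : (S \ Bad).Nonempty := by
      rw [Set.nonempty_iff_ne_empty]
      intro h
      apply hS
      have : S ⊆ Bad := by
        intro a ha
        by_contra hab
        exact (Set.eq_empty_iff_forall_notMem.mp h a) ⟨ha, hab⟩
      exact hBad.mono this
    obtain ⟨x, hxS, hxB⟩ := hne
    have hxT : x ∉ T := fun hx => hxB (Or.inl (Finset.mem_coe.mpr (Finset.mem_union_left _ hx)))
    refine ⟨insert x T, ?_, ?_, ?_⟩
    · intro a ha
      rcases Finset.mem_insert.mp (Finset.mem_coe.mp ha) with rfl | haT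
      · exact hxS
      · exact hTS haT
    · rw [Finset.card_insert_of_notMem hxT, hTc]
    · intro a ha b hb hab
      rcases Finset.mem_insert.mp ha with rfl | haT <;> rcases Finset.mem_insert.mp hb with h | hbT
      · exact absurd h.symm hab
      · -- a = x, b ∈ T : x ∉ F b
        intro hxFb
        exact hxB (Or.inl (Finset.mem_coe.mpr (Finset.mem_union_right _
          (Finset.mem_biUnion.mpr ⟨b, hbT, hxFb⟩))))
      · -- a ∈ T, b = x : a ∉ F x
        subst h
        intro haFx
        exact hxB (Or.inr (Set.mem_biUnion haT ⟨hxS, haFx⟩))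
      · exact hTfree a haT b hbT hab

lemma free_aux {Λ : Type*} (m : ℕ) : ∀ (k : ℕ) (F : Λ → Finset Λ) (S : Set Λ),
    ¬ S.Countable → (∀ a ∈ S, (F a).card ≤ k) →
    ∃ T : Finset Λ, ↑T ⊆ S ∧ T.card = m ∧ ∀ a ∈ T, ∀ b ∈ T, a ≠ b → a ∉ F b := by
  intro k
  induction k with
  | zero =>
    intro F S hS hcard
    apply build_free F S hS _ m
    intro x
    have : {a | a ∈ S ∧ x ∈ F a} = ∅ := by
      ext a
      simp only [Set.mem_setOf_eq, Set.mem_empty_iff_false, iff_false, not_and]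
      intro haS hx
      have := hcard a haS
      have := Finset.card_pos.mpr ⟨x, hx⟩
      omega
    rw [this]; exact Set.countable_empty
  | succ k ih =>
    intro F S hS hcard
    by_cases hdi : ∀ x, {a | a ∈ S ∧ x ∈ F a}.Countable
    · exact build_free F S hS hdi m
    · push_neg at hdi
      obtain ⟨x, hx⟩ := hdi
      classical
      set S' : Set Λ := {a | a ∈ S ∧ x ∈ F a} \ {x} with hS'def
      have hS' : ¬ S'.Countable := by
        intro h
        apply hx
        apply (h.insert x).mono
        intro a ha
        by_cases hax : a = x
        · exact Or.inl hax
        · exact Or.inr ⟨ha, hax⟩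
      have hcard' : ∀ a ∈ S', ((F a).erase x).card ≤ k := by
        intro a ha
        have hxa : x ∈ F a := ha.1.2
        have := hcard a ha.1.1
        rw [Finset.card_erase_of_mem hxa]
        omega
      obtain ⟨T, hTS, hTc, hTf⟩ := ih (fun a => (F a).erase x) S' hS' hcard'
      refine ⟨T, fun a ha => ((hTS ha).1).1, hTc, ?_⟩
      intro a ha b hb hab hFb
      have haX : a ≠ x := (hTS ha).2
      exact hTf a ha b hb hab (Finset.mem_erase.mpr ⟨haX, hFb⟩)

lemma free_set {Λ : Type*} (S : Set Λ) (hS : ¬ S.Countable) (F : Λ → Finset Λ) (m : ℕ) :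
    ∃ T : Finset Λ, ↑T ⊆ S ∧ T.card = m ∧ ∀ a ∈ T, ∀ b ∈ T, a ≠ b → a ∉ F b := by
  have : ∃ k, ¬ {a | a ∈ S ∧ (F a).card = k}.Countable := by
    by_contra h
    push_neg at h
    apply hS
    have : S ⊆ ⋃ k, {a | a ∈ S ∧ (F a).card = k} := by
      intro a ha; exact Set.mem_iUnion.mpr ⟨(F a).card, ha, rfl⟩
    exact (Set.countable_iUnion h).mono this
  obtain ⟨k, hk⟩ := this
  obtain ⟨T, hTS, hTc, hTf⟩ := free_aux m k F _ hk (fun a ha => le_of_eq ha.2)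
  exact ⟨T, fun a ha => (hTS ha).1, hTc, hTf⟩

/-- For uncountable `Λ`, the space `σ_{n+1}(Λ)` does not embed into `σ_n(Γ)^ω` for any `Γ`. -/
theorem stmt_6 (Λ : Type*) [Uncountable Λ] (Γ : Type*) (n : ℕ) :
    ∀ f : (sigmaSet Λ (n + 1)) → (ℕ → (sigmaSet Γ n)),
      Continuous f → ¬ Function.Injective f := by
  intro f hf hinj
  classical
  -- characteristic functions of finsets of size ≤ n+1
  have hmem : ∀ T : Finset Λ, T.card ≤ n + 1 →
      (fun μ => decide (μ ∈ T)) ∈ sigmaSet Λ (n + 1) := by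
    intro T hT
    have hset : {γ | decide (γ ∈ T) = true} = ↑T := by ext γ; simp
    exact ⟨hset ▸ T.finite_toSet, by rw [hset, Set.ncard_coe_finset]; exact hT⟩
  set x₀ : sigmaSet Λ (n + 1) := ⟨fun μ => decide (μ ∈ (∅ : Finset Λ)), hmem ∅ (by simp)⟩
    with hx₀def
  set e : Λ → sigmaSet Λ (n + 1) :=
    fun l => ⟨fun μ => decide (μ ∈ ({l} : Finset Λ)), hmem {l} (by simp)⟩ with hedef
  have hcont : ∀ (k : ℕ) (γ : Γ),
      Continuous (fun x : sigmaSet Λ (n + 1) => (f x k).val γ) := fun k γ =>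
    (continuous_apply γ).comp (continuous_subtype_val.comp ((continuous_apply k).comp hf))
  -- step 1: separation of e l from x₀
  have hexists : ∀ l : Λ, ∃ k γ, (f (e l) k).val γ ≠ (f x₀ k).val γ := by
    intro l
    have hne : e l ≠ x₀ := by
      intro hcontra
      have h2 := congrArg (fun z : sigmaSet Λ (n + 1) => z.val l) hcontra
      simp [hedef, hx₀def] at h2
    have hne2 : f (e l) ≠ f x₀ := fun hc => hne (hinj hc)
    rw [Function.ne_iff] at hne2
    obtain ⟨k, hk⟩ := hne2
    have : (f (e l) k).val ≠ (f x₀ k).val := fun hc => hk (Subtype.ext hc)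
    rw [Function.ne_iff] at this
    obtain ⟨γ, hγ⟩ := this
    exact ⟨k, γ, hγ⟩
  choose kf γf hdiff using hexists
  -- step 2: pigeonhole on k
  have hpig : ∃ k₀, ¬ {l : Λ | kf l = k₀}.Countable := by
    by_contra h
    push_neg at h
    apply Set.not_countable_univ (α := Λ)
    have hsub : (Set.univ : Set Λ) ⊆ ⋃ k, {l | kf l = k} := fun l _ =>
      Set.mem_iUnion.mpr ⟨kf l, rfl⟩
    exact (Set.countable_iUnion h).mono hsub
  obtain ⟨k₀, hk₀⟩ := hpig
  set S₁ := {l : Λ | kf l = k₀} with hS₁def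
  -- step 3: fibers of γf on S₁ are finite, via continuity at x₀
  have hF0 : ∀ γ0 : Γ, ∃ F : Finset Λ, ∀ y : sigmaSet Λ (n + 1),
      (∀ μ ∈ F, y.val μ = x₀.val μ) → (f y k₀).val γ0 = (f x₀ k₀).val γ0 := fun γ0 =>
    nbhd_dep _ (hcont k₀ γ0) x₀
  choose F0 hF0 using hF0
  have hfib : ∀ γ0 : Γ, {l | l ∈ S₁ ∧ γf l = γ0} ⊆ ↑(F0 γ0) := by
    rintro γ0 l ⟨hlS, hlγ⟩
    by_contra hlF
    apply hdiff l
    have hk : kf l = k₀ := hlS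
    rw [hk, hlγ]
    apply hF0 γ0 (e l)
    intro μ hμ
    have hμl : μ ≠ l := fun hc => hlF (hc ▸ hμ)
    simp [hedef, hx₀def, hμl]
  have hfibC : ∀ γ0 : Γ, {l | l ∈ S₁ ∧ γf l = γ0}.Countable := fun γ0 =>
    ((F0 γ0).finite_toSet.subset (hfib γ0)).countable
  -- step 4: remove the reverse case
  set R := {l | l ∈ S₁ ∧ (f x₀ k₀).val (γf l) = true} with hRdef
  have hR : R.Countable := by
    have hsub : R ⊆ ⋃ γ0 ∈ {γ : Γ | (f x₀ k₀).val γ = true}, {l | l ∈ S₁ ∧ γf l = γ0} := by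
      rintro l ⟨h1, h2⟩
      exact Set.mem_biUnion h2 ⟨h1, rfl⟩
    exact (Set.Countable.biUnion (f x₀ k₀).2.1.countable fun γ0 _ => hfibC γ0).mono hsub
  set S₂ := S₁ \ R with hS₂def
  have hS₂ : ¬ S₂.Countable := by
    intro h
    apply hk₀
    have hsub : S₁ ⊆ S₂ ∪ R := by
      intro l hl
      by_cases hlR : l ∈ R
      · exact Or.inr hlR
      · exact Or.inl ⟨hl, hlR⟩
    exact (h.union hR).mono hsub
  have hS₂val : ∀ l ∈ S₂, (f (e l) k₀).val (γf l) = true := by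
    intro l hl
    have h0 : (f x₀ k₀).val (γf l) = false := by
      have hnR : l ∉ R := hl.2
      rw [hRdef] at hnR
      simp only [Set.mem_setOf_eq, not_and] at hnR
      exact Bool.not_eq_true _ ▸ (hnR hl.1)
    have hd := hdiff l
    have hk : kf l = k₀ := hl.1
    rw [hk, h0] at hd
    exact Bool.not_eq_false _ ▸ hd
  -- step 5: make γf injective on an uncountable subset
  set G := γf '' S₂ with hGdef
  have hG : ¬ G.Countable := by
    intro h
    apply hS₂
    have hsub : S₂ ⊆ ⋃ γ0 ∈ G, {l | l ∈ S₁ ∧ γf l = γ0} := fun l hl =>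
      Set.mem_biUnion (Set.mem_image_of_mem _ hl) ⟨hl.1, rfl⟩
    exact (Set.Countable.biUnion h fun γ0 _ => hfibC γ0).mono hsub
  have hsec : ∀ γ0 ∈ G, ∃ l, l ∈ S₂ ∧ γf l = γ0 := by
    rintro γ0 ⟨l, hl, rfl⟩
    exact ⟨l, hl, rfl⟩
  choose! sec hsec1 hsec2 using hsec
  set S₃ := sec '' G with hS₃def
  have hS₃sub : S₃ ⊆ S₂ := by
    rintro l ⟨γ0, hγ0, rfl⟩
    exact hsec1 γ0 hγ0
  have hS₃ : ¬ S₃.Countable := by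
    intro h
    apply hG
    have hsub : G ⊆ γf '' S₃ := fun γ0 hγ0 =>
      ⟨sec γ0, Set.mem_image_of_mem _ hγ0, hsec2 γ0 hγ0⟩
    exact (h.image γf).mono hsub
  have hinj3 : Set.InjOn γf S₃ := by
    rintro a ⟨γa, hγa, rfl⟩ b ⟨γb, hγb, rfl⟩ hab
    rw [hsec2 _ hγa, hsec2 _ hγb] at hab
    rw [hab]
  -- step 6: continuity at each e l
  have hFl : ∀ l : Λ, ∃ F : Finset Λ, ∀ y : sigmaSet Λ (n + 1),
      (∀ μ ∈ F, y.val μ = (e l).val μ) →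
      (f y k₀).val (γf l) = (f (e l) k₀).val (γf l) := fun l =>
    nbhd_dep _ (hcont k₀ (γf l)) (e l)
  choose Fl hFl using hFl
  -- step 7: free set of size n+1
  obtain ⟨T, hTS, hTc, hTfree⟩ := free_set S₃ hS₃ Fl (n + 1)
  -- step 8: the contradiction
  set y : sigmaSet Λ (n + 1) := ⟨fun μ => decide (μ ∈ T), hmem T (le_of_eq hTc)⟩ with hydef
  have htrue : ∀ l ∈ T, (f y k₀).val (γf l) = true := by
    intro l hl
    have hagree : ∀ μ ∈ Fl l, y.val μ = (e l).val μ := by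
      intro μ hμ
      by_cases hμl : μ = l
      · subst hμl
        simp [hydef, hedef, hl]
      · have hμT : μ ∉ T := fun hc => hTfree μ hc l hl hμl hμ
        simp [hydef, hedef, hμT, hμl]
    rw [hFl l y hagree]
    exact hS₂val l (hS₃sub (hTS hl))
  have himg : γf '' ↑T ⊆ {γ | (f y k₀).val γ = true} := by
    rintro γ ⟨l, hl, rfl⟩
    exact htrue l hl
  have hcard1 : (γf '' ↑T).ncard = n + 1 := by
    rw [Set.ncard_image_of_injOn (hinj3.mono hTS), Set.ncard_coe_finset, hTc]
  have hle := Set.ncard_le_ncard himg (f y k₀).2.1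
  have := (f y k₀).2.2
  omega
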